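/- For any triangle ABC with all angles less than 120°, there exists a unique point F such that ∠AFB = ∠BFC = ∠CFA = 120°. -/

import Mathlib

open InnerProductGeometry Real RealInnerProductSpace

variable {E : Type*} [NormedAddCommGroup E] [InnerProductSpace ℝ E]

theorem myHasFDerivAt_norm {y : E} (hy : y ≠ 0) :
    HasFDerivAt (fun x : E => ‖x‖) (‖y‖⁻¹ • (innerSL ℝ y)) y := by
  have h1 : HasFDerivAt (fun x : E => ‖x‖ ^ 2) (2 • (innerSL ℝ y)) y := by
    simpa using (hasFDerivAt_id y).norm_sq
  have h2 : HasDerivAt Real.sqrt (1 / (2 * Real.sqrt (‖y‖ ^ 2))) (‖y‖ ^ 2) := by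
    apply Real.hasDerivAt_sqrt; simpa using hy
  have h3 := h2.comp_hasFDerivAt y h1
  have hnorm : (fun x : E => ‖x‖) = fun x : E => Real.sqrt (‖x‖ ^ 2) := by
    funext x; rw [Real.sqrt_sq (norm_nonneg x)]
  rw [hnorm]
  refine h3.congr_fderiv ?_
  rw [Real.sqrt_sq (norm_nonneg y)]
  ext z
  simp [smul_smul]
  ring

theorem normSubDeriv (a f : E) (h : f ≠ a) :
    HasFDerivAt (fun x : E => ‖x - a‖) (‖f - a‖⁻¹ • (innerSL ℝ (f - a))) f := by
  have h1 : HasFDerivAt (fun x : E => x - a) (ContinuousLinearMap.id ℝ E) f :=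
    (hasFDerivAt_id f).sub_const a
  have h2 := (myHasFDerivAt_norm (sub_ne_zero.mpr h)).comp f h1
  exact h2.congr_fderiv (by ext; simp)

theorem cos_two_pi_div_three : Real.cos (2 * π / 3) = -(1/2) := by
  have h : (2 * π / 3) = π - π/3 := by ring
  rw [h, Real.cos_pi_sub, Real.cos_pi_div_three]

theorem arccos_neg_half : Real.arccos (-(1/2)) = 2 * π / 3 := by
  rw [Real.arccos_neg]
  have : Real.arccos (1/2) = π / 3 := by
    rw [← Real.cos_pi_div_three]
    exact Real.arccos_cos (by positivity) (by linarith [Real.pi_pos])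
  rw [this]; ring

theorem angle_eq_of_inner {x y : E} (hx : x ≠ 0) (hy : y ≠ 0)
    (h : ⟪x, y⟫ = -(1/2) * (‖x‖ * ‖y‖)) :
    InnerProductGeometry.angle x y = 2 * π / 3 := by
  rw [InnerProductGeometry.angle, h]
  rw [mul_div_assoc, div_self (mul_pos (norm_pos_iff.mpr hx) (norm_pos_iff.mpr hy)).ne', mul_one]
  exact arccos_neg_half

theorem inner_of_angle {x y : E} (hx : x ≠ 0) (hy : y ≠ 0)
    (h : InnerProductGeometry.angle x y = 2 * π / 3) :
    ⟪x, y⟫ = -(1/2) * (‖x‖ * ‖y‖) := by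
  have hc := InnerProductGeometry.cos_angle x y
  rw [h, cos_two_pi_div_three] at hc
  have hne : ‖x‖ * ‖y‖ ≠ 0 := (mul_pos (norm_pos_iff.mpr hx) (norm_pos_iff.mpr hy)).ne'
  field_simp at hc
  linarith [hc]

theorem per_vertex (F V X : E) (h : F ≠ V) :
    ‖F - V‖⁻¹ * ⟪X - F, F - V⟫ + ‖F - V‖ ≤ ‖X - V‖ := by
  have hpos : (0:ℝ) < ‖F - V‖ := norm_pos_iff.mpr (sub_ne_zero.mpr h)
  have h1 : ⟪X - V, F - V⟫ ≤ ‖X - V‖ * ‖F - V‖ := real_inner_le_norm _ _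
  have h2 : ⟪X - V, F - V⟫ = ⟪X - F, F - V⟫ + ‖F - V‖^2 := by
    have : X - V = (X - F) + (F - V) := by abel
    rw [this, inner_add_left, real_inner_self_eq_norm_sq]
  rw [h2] at h1
  have h3 : ‖F - V‖⁻¹ * ⟪X - F, F - V⟫ + ‖F - V‖
      = (⟪X - F, F - V⟫ + ‖F - V‖^2) / ‖F - V‖ := by field_simp
  rw [h3, div_le_iff₀ hpos]
  linarith

theorem per_vertex_eq (F V X : E) (h : F ≠ V)
    (heq : ‖F - V‖⁻¹ * ⟪X - F, F - V⟫ + ‖F - V‖ = ‖X - V‖) :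
    ‖F - V‖ • (X - V) = ‖X - V‖ • (F - V) := by
  have hpos : (0:ℝ) < ‖F - V‖ := norm_pos_iff.mpr (sub_ne_zero.mpr h)
  have h2 : ⟪X - V, F - V⟫ = ⟪X - F, F - V⟫ + ‖F - V‖^2 := by
    have : X - V = (X - F) + (F - V) := by abel
    rw [this, inner_add_left, real_inner_self_eq_norm_sq]
  have : ⟪X - V, F - V⟫ = ‖X - V‖ * ‖F - V‖ := by
    rw [h2]
    field_simp at heq ⊢
    nlinarith [heq]
  exact inner_eq_norm_mul_iff_real.mp this

theorem vertex_decrease (P Q R : E) (hQ : Q ≠ P) (hR : R ≠ P)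
    (hang : InnerProductGeometry.angle (Q - P) (R - P) < 2 * π / 3) :
    ∃ X : E, ‖X - P‖ + ‖X - Q‖ + ‖X - R‖ < ‖P - Q‖ + ‖P - R‖ := by
  have hQP : Q - P ≠ 0 := sub_ne_zero.mpr hQ
  have hRP : R - P ≠ 0 := sub_ne_zero.mpr hR
  have hQn : (0:ℝ) < ‖Q - P‖ := norm_pos_iff.mpr hQP
  have hRn : (0:ℝ) < ‖R - P‖ := norm_pos_iff.mpr hRP
  set u : E := ‖Q - P‖⁻¹ • (Q - P) with hu_def
  set v : E := ‖R - P‖⁻¹ • (R - P) with hv_def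
  have hu : ‖u‖ = 1 := by rw [hu_def, norm_smul]; simp [abs_of_pos hQn]; field_simp
  have hv : ‖v‖ = 1 := by rw [hv_def, norm_smul]; simp [abs_of_pos hRn]; field_simp
  -- inner product > -1/2
  have hcos : -(1/2) < ⟪u, v⟫ := by
    have h1 : Real.cos (2 * π / 3) < Real.cos (InnerProductGeometry.angle (Q - P) (R - P)) := by
      apply Real.cos_lt_cos_of_nonneg_of_le_pi (InnerProductGeometry.angle_nonneg _ _)
        (by linarith [Real.pi_pos]) hang
    rw [cos_two_pi_div_three, InnerProductGeometry.cos_angle] at h1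
    have h2 : ⟪u, v⟫ = ⟪Q - P, R - P⟫ / (‖Q - P‖ * ‖R - P‖) := by
      rw [hu_def, hv_def, real_inner_smul_left, real_inner_smul_right]
      field_simp
    rw [h2]; exact h1
  set d : E := u + v with hd_def
  have hdsq : ‖d‖^2 = 2 + 2 * ⟪u, v⟫ := by
    rw [hd_def, ← real_inner_self_eq_norm_sq, inner_add_add_self,
      real_inner_self_eq_norm_sq, real_inner_self_eq_norm_sq, hu, hv, real_inner_comm v u]
    ring
  have hd1 : 1 < ‖d‖ := by
    nlinarith [norm_nonneg d]
  -- the function φ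
  set φ : ℝ → ℝ := fun t => ‖(P + t • d) - Q‖ + ‖(P + t • d) - R‖ + t * ‖d‖ with hφ_def
  have hc : ∀ t : ℝ, HasDerivAt (fun s : ℝ => P + s • d) d t := by
    intro t
    simpa using ((hasDerivAt_id t).smul_const d).const_add P
  have hderivQ : HasDerivAt (fun t : ℝ => ‖(P + t • d) - Q‖) (‖P - Q‖⁻¹ * ⟪P - Q, d⟫) 0 := by
    have := (normSubDeriv Q (P + (0:ℝ) • d) (by simpa using hQ.symm)).comp_hasDerivAt 0 (hc 0)
    simp [Function.comp_def, inner_sub_left, mul_sub] at this ⊢; exact this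
  have hderivR : HasDerivAt (fun t : ℝ => ‖(P + t • d) - R‖) (‖P - R‖⁻¹ * ⟪P - R, d⟫) 0 := by
    have := (normSubDeriv R (P + (0:ℝ) • d) (by simpa using hR.symm)).comp_hasDerivAt 0 (hc 0)
    simp [Function.comp_def, inner_sub_left, mul_sub] at this ⊢; exact this
  have hφderiv : HasDerivAt φ (‖d‖ - ‖d‖^2) 0 := by
    have h3 : HasDerivAt (fun t : ℝ => t * ‖d‖) (‖d‖) 0 := by
      simpa using (hasDerivAt_id (0:ℝ)).mul_const ‖d‖
    have := (hderivQ.add hderivR).add h3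
    refine this.congr_deriv ?_
    have e1 : ‖P - Q‖⁻¹ * ⟪P - Q, d⟫ = -⟪u, d⟫ := by
      rw [hu_def, real_inner_smul_left]
      rw [show P - Q = -(Q - P) by abel, inner_neg_left, norm_neg]
      ring
    have e2 : ‖P - R‖⁻¹ * ⟪P - R, d⟫ = -⟪v, d⟫ := by
      rw [hv_def, real_inner_smul_left]
      rw [show P - R = -(R - P) by abel, inner_neg_left, norm_neg]
      ring
    have e3 : ⟪u, d⟫ + ⟪v, d⟫ = ‖d‖^2 := by
      rw [hd_def, ← inner_add_left, ← hd_def, real_inner_self_eq_norm_sq]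
    rw [e1, e2]
    linarith
  have hneg : ‖d‖ - ‖d‖^2 < 0 := by nlinarith
  -- slope argument
  have hslope := hasDerivAt_iff_tendsto_slope.mp hφderiv
  have hmono : nhdsWithin (0:ℝ) (Set.Ioi 0) ≤ nhdsWithin (0:ℝ) {(0:ℝ)}ᶜ :=
    nhdsWithin_mono 0 (fun x hx => ne_of_gt hx)
  have hev : ∀ᶠ t in nhdsWithin (0:ℝ) (Set.Ioi 0), slope φ 0 t < 0 :=
    (hslope.eventually_lt_const hneg).filter_mono hmono
  obtain ⟨t, hts, ht0⟩ := (hev.and eventually_mem_nhdsWithin).exists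
  rw [slope_def_field] at hts
  have ht : (0:ℝ) < t := ht0
  have hφt : φ t < φ 0 := by
    have h9 : φ t - φ 0 < 0 := by
      by_contra h9
      push_neg at h9
      have : 0 ≤ (φ t - φ 0) / (t - 0) := div_nonneg h9 (by linarith)
      linarith
    linarith
  refine ⟨P + t • d, ?_⟩
  have hXP : ‖(P + t • d) - P‖ = t * ‖d‖ := by
    simp [norm_smul, abs_of_pos ht]
  have hφ0 : φ 0 = ‖P - Q‖ + ‖P - R‖ := by simp [hφ_def]
  have := hφt
  rw [hφ0] at this
  calc ‖(P + t • d) - P‖ + ‖(P + t • d) - Q‖ + ‖(P + t • d) - R‖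
      = φ t := by rw [hXP, hφ_def]; ring
    _ < ‖P - Q‖ + ‖P - R‖ := this

theorem units_angle {x y : E} (hx : x ≠ 0) (hy : y ≠ 0)
    (h : ⟪‖x‖⁻¹ • x, ‖y‖⁻¹ • y⟫ = -(1/2)) : InnerProductGeometry.angle x y = 2 * π / 3 := by
  apply angle_eq_of_inner hx hy
  rw [real_inner_smul_left, real_inner_smul_right] at h
  have hxn : ‖x‖ ≠ 0 := norm_ne_zero_iff.mpr hx
  have hyn : ‖y‖ ≠ 0 := norm_ne_zero_iff.mpr hy
  field_simp at h
  linarith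

theorem pair_inner_of_sum_zero {a b c : E} (ha : ‖a‖ = 1) (hb : ‖b‖ = 1) (hc : ‖c‖ = 1)
    (h : a + b + c = 0) : ⟪a, b⟫ = -(1/2) := by
  have h1 : c = -(a + b) := eq_neg_of_add_eq_zero_right h
  have h2 : ‖c‖^2 = ‖a + b‖^2 := by rw [h1, norm_neg]
  have h3 : ‖a + b‖^2 = ‖a‖^2 + 2 * ⟪a, b⟫ + ‖b‖^2 := by
    rw [← real_inner_self_eq_norm_sq, inner_add_add_self, real_inner_self_eq_norm_sq,
      real_inner_self_eq_norm_sq, real_inner_comm b a]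
    ring
  rw [ha, hb] at h3
  rw [hc, h3] at h2
  linarith

theorem fermat_min {A B C F : E} (hFA : F ≠ A) (hFB : F ≠ B) (hFC : F ≠ C)
    (hsum : ‖F - A‖⁻¹ • (F - A) + ‖F - B‖⁻¹ • (F - B) + ‖F - C‖⁻¹ • (F - C) = 0) (X : E) :
    ‖F - A‖⁻¹ * ⟪X - F, F - A⟫ + ‖F - B‖⁻¹ * ⟪X - F, F - B⟫ + ‖F - C‖⁻¹ * ⟪X - F, F - C⟫ = 0
    ∧ ‖F - A‖ + ‖F - B‖ + ‖F - C‖ ≤ ‖X - A‖ + ‖X - B‖ + ‖X - C‖ := by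
  have hin : ‖F - A‖⁻¹ * ⟪X - F, F - A⟫ + ‖F - B‖⁻¹ * ⟪X - F, F - B⟫
      + ‖F - C‖⁻¹ * ⟪X - F, F - C⟫ = 0 := by
    have h0 : ⟪X - F, ‖F - A‖⁻¹ • (F - A) + ‖F - B‖⁻¹ • (F - B) + ‖F - C‖⁻¹ • (F - C)⟫
        = (0:ℝ) := by rw [hsum, inner_zero_right]
    rw [inner_add_right, inner_add_right, real_inner_smul_right, real_inner_smul_right,
      real_inner_smul_right] at h0
    linarith
  exact ⟨hin, by linarith [per_vertex F A X hFA, per_vertex F B X hFB, per_vertex F C X hFC]⟩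

theorem sum_zero_of_angles (A B C F : E)
    (h1 : InnerProductGeometry.angle (A - F) (B - F) = 2 * π / 3)
    (h2 : InnerProductGeometry.angle (B - F) (C - F) = 2 * π / 3)
    (h3 : InnerProductGeometry.angle (C - F) (A - F) = 2 * π / 3) :
    F ≠ A ∧ F ≠ B ∧ F ≠ C ∧
      ‖F - A‖⁻¹ • (F - A) + ‖F - B‖⁻¹ • (F - B) + ‖F - C‖⁻¹ • (F - C) = 0 := by
  have hpi : π / 2 ≠ 2 * π / 3 := by
    intro h; have := Real.pi_pos; nlinarith [h]
  have hFA : F ≠ A := by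
    rintro rfl
    rw [sub_self, InnerProductGeometry.angle_zero_left] at h1
    exact hpi h1
  have hFB : F ≠ B := by
    rintro rfl
    rw [sub_self, InnerProductGeometry.angle_zero_left] at h2
    exact hpi h2
  have hFC : F ≠ C := by
    rintro rfl
    rw [sub_self, InnerProductGeometry.angle_zero_left] at h3
    exact hpi h3
  have hAF : A - F ≠ 0 := sub_ne_zero.mpr (Ne.symm hFA)
  have hBF : B - F ≠ 0 := sub_ne_zero.mpr (Ne.symm hFB)
  have hCF : C - F ≠ 0 := sub_ne_zero.mpr (Ne.symm hFC)
  set a : E := ‖A - F‖⁻¹ • (A - F) with ha_def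
  set b : E := ‖B - F‖⁻¹ • (B - F) with hb_def
  set c : E := ‖C - F‖⁻¹ • (C - F) with hc_def
  have ha : ‖a‖ = 1 := by
    rw [ha_def]; exact norm_smul_inv_norm hAF
  have hb : ‖b‖ = 1 := by
    rw [hb_def]; exact norm_smul_inv_norm hBF
  have hc : ‖c‖ = 1 := by
    rw [hc_def]; exact norm_smul_inv_norm hCF
  have hab : ⟪a, b⟫ = -(1/2) := by
    have := inner_of_angle hAF hBF h1
    rw [ha_def, hb_def, real_inner_smul_left, real_inner_smul_right, this]
    have h4 : ‖A - F‖ ≠ 0 := norm_ne_zero_iff.mpr hAF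
    have h5 : ‖B - F‖ ≠ 0 := norm_ne_zero_iff.mpr hBF
    field_simp
  have hbc : ⟪b, c⟫ = -(1/2) := by
    have := inner_of_angle hBF hCF h2
    rw [hb_def, hc_def, real_inner_smul_left, real_inner_smul_right, this]
    have h4 : ‖B - F‖ ≠ 0 := norm_ne_zero_iff.mpr hBF
    have h5 : ‖C - F‖ ≠ 0 := norm_ne_zero_iff.mpr hCF
    field_simp
  have hca : ⟪c, a⟫ = -(1/2) := by
    have := inner_of_angle hCF hAF h3
    rw [hc_def, ha_def, real_inner_smul_left, real_inner_smul_right, this]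
    have h4 : ‖C - F‖ ≠ 0 := norm_ne_zero_iff.mpr hCF
    have h5 : ‖A - F‖ ≠ 0 := norm_ne_zero_iff.mpr hAF
    field_simp
  have hba : ⟪b, a⟫ = -(1/2) := by rw [real_inner_comm]; exact hab
  have hcb : ⟪c, b⟫ = -(1/2) := by rw [real_inner_comm]; exact hbc
  have hac : ⟪a, c⟫ = -(1/2) := by rw [real_inner_comm]; exact hca
  have hsum : a + b + c = 0 := by
    have hnorm : ⟪a + b + c, a + b + c⟫ = 0 := by
      simp only [inner_add_left, inner_add_right, real_inner_self_eq_norm_sq, ha, hb, hc,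
        hab, hba, hbc, hcb, hca, hac]
      norm_num
    exact inner_self_eq_zero.mp hnorm
  refine ⟨hFA, hFB, hFC, ?_⟩
  have e1 : ‖F - A‖⁻¹ • (F - A) = -a := by
    rw [ha_def, norm_sub_rev, show F - A = -(A - F) by abel, smul_neg]
  have e2 : ‖F - B‖⁻¹ • (F - B) = -b := by
    rw [hb_def, norm_sub_rev, show F - B = -(B - F) by abel, smul_neg]
  have e3 : ‖F - C‖⁻¹ • (F - C) = -c := by
    rw [hc_def, norm_sub_rev, show F - C = -(C - F) by abel, smul_neg]
  rw [e1, e2, e3, ← neg_add, ← neg_add, hsum, neg_zero]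

theorem ray_point {F V y : E} (hFV : F ≠ V) (hyF : y ≠ F)
    (h : ‖F - V‖ • (y - V) = ‖y - V‖ • (F - V)) : ∃ r : ℝ, V = r • (y - F) + F := by
  have hn : ‖F - V‖ ≠ 0 := norm_ne_zero_iff.mpr (sub_ne_zero.mpr hFV)
  set c : ℝ := ‖y - V‖ / ‖F - V‖ with hcdef
  have h1 : y - V = c • (F - V) := by
    calc y - V = ‖F - V‖⁻¹ • (‖F - V‖ • (y - V)) := by
          rw [smul_smul, inv_mul_cancel₀ hn, one_smul]
      _ = ‖F - V‖⁻¹ • (‖y - V‖ • (F - V)) := by rw [h]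
      _ = c • (F - V) := by rw [smul_smul, hcdef, div_eq_inv_mul]
  have h2 : y - F = (c - 1) • (F - V) := by
    rw [sub_smul, one_smul, ← h1]; abel
  have hc1 : c - 1 ≠ 0 := by
    intro h0
    apply hyF
    rw [h0, zero_smul] at h2
    exact sub_eq_zero.mp h2
  refine ⟨-(c - 1)⁻¹, ?_⟩
  have h3 : F - V = (c - 1)⁻¹ • (y - F) := by
    rw [h2, smul_smul, inv_mul_cancel₀ hc1, one_smul]
  have h4 : V = F - (c - 1)⁻¹ • (y - F) := by rw [← h3]; abel
  rw [h4, neg_smul]; abel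

open EuclideanGeometry

theorem fermat_point_exists_unique
    (A B C : EuclideanSpace ℝ (Fin 2))
    (hncol : ¬ Collinear ℝ ({A, B, C} : Set (EuclideanSpace ℝ (Fin 2))))
    (hA : ∠ B A C < 2 * Real.pi / 3)
    (hB : ∠ A B C < 2 * Real.pi / 3)
    (hC : ∠ B C A < 2 * Real.pi / 3) :
    ∃! F : EuclideanSpace ℝ (Fin 2),
      ∠ A F B = 2 * Real.pi / 3 ∧ ∠ B F C = 2 * Real.pi / 3 ∧
        ∠ C F A = 2 * Real.pi / 3 := by
  have hBA : B ≠ A := by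
    rintro rfl
    apply hncol
    have he : ({B, B, C} : Set (EuclideanSpace ℝ (Fin 2))) = {B, C} := by
      ext x; simp
    rw [he]; exact collinear_pair ℝ B C
  have hCA : C ≠ A := by
    rintro rfl
    apply hncol
    have he : ({C, B, C} : Set (EuclideanSpace ℝ (Fin 2))) = {C, B} := by
      ext x; simp; tauto
    rw [he]; exact collinear_pair ℝ C B
  have hCB : C ≠ B := by
    rintro rfl
    apply hncol
    have he : ({A, C, C} : Set (EuclideanSpace ℝ (Fin 2))) = {A, C} := by
      ext x; simp
    rw [he]; exact collinear_pair ℝ A C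
  have hangA : InnerProductGeometry.angle (B - A) (C - A) < 2 * π / 3 := by
    rw [EuclideanGeometry.angle, vsub_eq_sub, vsub_eq_sub] at hA; exact hA
  have hangB : InnerProductGeometry.angle (A - B) (C - B) < 2 * π / 3 := by
    rw [EuclideanGeometry.angle, vsub_eq_sub, vsub_eq_sub] at hB; exact hB
  have hangC : InnerProductGeometry.angle (B - C) (A - C) < 2 * π / 3 := by
    rw [EuclideanGeometry.angle, vsub_eq_sub, vsub_eq_sub] at hC; exact hC
  set g : EuclideanSpace ℝ (Fin 2) → ℝ := fun X => ‖X - A‖ + ‖X - B‖ + ‖X - C‖ with hgdef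
  have hgcont : Continuous g := by
    apply Continuous.add
    apply Continuous.add
    · exact (continuous_id.sub continuous_const).norm
    · exact (continuous_id.sub continuous_const).norm
    · exact (continuous_id.sub continuous_const).norm
  have hg0 : (0:ℝ) ≤ g A + 1 := by
    simp only [hgdef]
    positivity
  obtain ⟨F, hFmem, hFmin⟩ := (isCompact_closedBall A (g A + 1)).exists_isMinOn
    ⟨A, Metric.mem_closedBall_self hg0⟩ hgcont.continuousOn
  have hglobal : ∀ X, g F ≤ g X := by
    intro X
    by_cases hX : X ∈ Metric.closedBall A (g A + 1)
    · exact hFmin hX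
    · have h1 : g A + 1 < dist X A := by
        rw [Metric.mem_closedBall] at hX; linarith [not_le.mp hX]
      have h2 : dist X A = ‖X - A‖ := dist_eq_norm X A
      have h3 : g F ≤ g A := hFmin (Metric.mem_closedBall_self hg0)
      have h4 : ‖X - A‖ ≤ g X := by
        simp only [hgdef]
        linarith [norm_nonneg (X - B), norm_nonneg (X - C)]
      linarith
  have hFA : F ≠ A := by
    rintro rfl
    obtain ⟨X, hX⟩ := vertex_decrease F B C hBA hCA hangA
    have h5 := hglobal X
    simp only [hgdef, sub_self, norm_zero] at h5
    linarith
  have hFB : F ≠ B := by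
    rintro rfl
    obtain ⟨X, hX⟩ := vertex_decrease F A C (Ne.symm hBA) hCB hangB
    have h5 := hglobal X
    simp only [hgdef, sub_self, norm_zero] at h5
    linarith
  have hFC : F ≠ C := by
    rintro rfl
    obtain ⟨X, hX⟩ := vertex_decrease F B A (Ne.symm hCB) (Ne.symm hCA) hangC
    have h5 := hglobal X
    simp only [hgdef, sub_self, norm_zero] at h5
    linarith
  have hL : HasFDerivAt g ((‖F - A‖⁻¹ • innerSL ℝ (F - A)) + (‖F - B‖⁻¹ • innerSL ℝ (F - B))
      + (‖F - C‖⁻¹ • innerSL ℝ (F - C))) F := by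
    simp only [hgdef]
    exact ((normSubDeriv A F hFA).add (normSubDeriv B F hFB)).add (normSubDeriv C F hFC)
  have hmin : IsLocalMin g F := Filter.Eventually.of_forall hglobal
  have hL0 := hmin.hasFDerivAt_eq_zero hL
  have hsF : ‖F - A‖⁻¹ • (F - A) + ‖F - B‖⁻¹ • (F - B) + ‖F - C‖⁻¹ • (F - C) = 0 := by
    set s : EuclideanSpace ℝ (Fin 2) :=
      ‖F - A‖⁻¹ • (F - A) + ‖F - B‖⁻¹ • (F - B) + ‖F - C‖⁻¹ • (F - C) with hsdef
    have happ := congrArg (fun (L : EuclideanSpace ℝ (Fin 2) →L[ℝ] ℝ) => L s) hL0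
    simp only [ContinuousLinearMap.add_apply, ContinuousLinearMap.coe_smul',
      Pi.smul_apply, innerSL_apply_apply, ContinuousLinearMap.zero_apply, smul_eq_mul] at happ
    have hss : ⟪s, s⟫ = (0:ℝ) := by
      conv_lhs => rw [hsdef]
      rw [inner_add_left, inner_add_left, real_inner_smul_left, real_inner_smul_left,
        real_inner_smul_left]
      linarith
    exact inner_self_eq_zero.mp hss
  -- angles at F
  have hAF : A - F ≠ 0 := sub_ne_zero.mpr (Ne.symm hFA)
  have hBF : B - F ≠ 0 := sub_ne_zero.mpr (Ne.symm hFB)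
  have hCF : C - F ≠ 0 := sub_ne_zero.mpr (Ne.symm hFC)
  have habc : ‖A - F‖⁻¹ • (A - F) + ‖B - F‖⁻¹ • (B - F) + ‖C - F‖⁻¹ • (C - F) = 0 := by
    have e1 : ‖F - A‖⁻¹ • (F - A) = -(‖A - F‖⁻¹ • (A - F)) := by
      rw [norm_sub_rev, show F - A = -(A - F) by abel, smul_neg]
    have e2 : ‖F - B‖⁻¹ • (F - B) = -(‖B - F‖⁻¹ • (B - F)) := by
      rw [norm_sub_rev, show F - B = -(B - F) by abel, smul_neg]
    have e3 : ‖F - C‖⁻¹ • (F - C) = -(‖C - F‖⁻¹ • (C - F)) := by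
      rw [norm_sub_rev, show F - C = -(C - F) by abel, smul_neg]
    rw [e1, e2, e3] at hsF
    have h9 : ‖A - F‖⁻¹ • (A - F) + ‖B - F‖⁻¹ • (B - F) + ‖C - F‖⁻¹ • (C - F)
        = -(-(‖A - F‖⁻¹ • (A - F)) + -(‖B - F‖⁻¹ • (B - F)) + -(‖C - F‖⁻¹ • (C - F))) := by
      abel
    rw [h9, hsF, neg_zero]
  have ha : ‖‖A - F‖⁻¹ • (A - F)‖ = 1 := norm_smul_inv_norm hAF
  have hb : ‖‖B - F‖⁻¹ • (B - F)‖ = 1 := norm_smul_inv_norm hBF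
  have hc : ‖‖C - F‖⁻¹ • (C - F)‖ = 1 := norm_smul_inv_norm hCF
  have habc2 : ‖B - F‖⁻¹ • (B - F) + ‖C - F‖⁻¹ • (C - F) + ‖A - F‖⁻¹ • (A - F) = 0 := by
    calc ‖B - F‖⁻¹ • (B - F) + ‖C - F‖⁻¹ • (C - F) + ‖A - F‖⁻¹ • (A - F)
        = ‖A - F‖⁻¹ • (A - F) + ‖B - F‖⁻¹ • (B - F) + ‖C - F‖⁻¹ • (C - F) := by abel
      _ = 0 := habc
  have habc3 : ‖C - F‖⁻¹ • (C - F) + ‖A - F‖⁻¹ • (A - F) + ‖B - F‖⁻¹ • (B - F) = 0 := by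
    calc ‖C - F‖⁻¹ • (C - F) + ‖A - F‖⁻¹ • (A - F) + ‖B - F‖⁻¹ • (B - F)
        = ‖A - F‖⁻¹ • (A - F) + ‖B - F‖⁻¹ • (B - F) + ‖C - F‖⁻¹ • (C - F) := by abel
      _ = 0 := habc
  have hangFA : ∠ A F B = 2 * π / 3 := by
    rw [EuclideanGeometry.angle, vsub_eq_sub, vsub_eq_sub]
    exact units_angle hAF hBF (pair_inner_of_sum_zero ha hb hc habc)
  have hangFB : ∠ B F C = 2 * π / 3 := by
    rw [EuclideanGeometry.angle, vsub_eq_sub, vsub_eq_sub]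
    exact units_angle hBF hCF (pair_inner_of_sum_zero hb hc ha habc2)
  have hangFC : ∠ C F A = 2 * π / 3 := by
    rw [EuclideanGeometry.angle, vsub_eq_sub, vsub_eq_sub]
    exact units_angle hCF hAF (pair_inner_of_sum_zero hc ha hb habc3)
  refine ⟨F, ⟨hangFA, hangFB, hangFC⟩, ?_⟩
  intro y hy
  obtain ⟨hy1, hy2, hy3⟩ := hy
  rw [EuclideanGeometry.angle, vsub_eq_sub, vsub_eq_sub] at hy1 hy2 hy3
  obtain ⟨hyA, hyB, hyC, hsumy⟩ := sum_zero_of_angles A B C y hy1 hy2 hy3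
  by_contra hne
  have h1 := (fermat_min hFA hFB hFC hsF y).2
  have h2 := (fermat_min hyA hyB hyC hsumy F).2
  have hinF := (fermat_min hFA hFB hFC hsF y).1
  have pA := per_vertex F A y hFA
  have pB := per_vertex F B y hFB
  have pC := per_vertex F C y hFC
  have eqA : ‖F - A‖⁻¹ * ⟪y - F, F - A⟫ + ‖F - A‖ = ‖y - A‖ := by linarith
  have eqB : ‖F - B‖⁻¹ * ⟪y - F, F - B⟫ + ‖F - B‖ = ‖y - B‖ := by linarith
  have eqC : ‖F - C‖⁻¹ * ⟪y - F, F - C⟫ + ‖F - C‖ = ‖y - C‖ := by linarith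
  obtain ⟨rA, hrA⟩ := ray_point hFA hne (per_vertex_eq F A y hFA eqA)
  obtain ⟨rB, hrB⟩ := ray_point hFB hne (per_vertex_eq F B y hFB eqB)
  obtain ⟨rC, hrC⟩ := ray_point hFC hne (per_vertex_eq F C y hFC eqC)
  apply hncol
  rw [collinear_iff_exists_forall_eq_smul_vadd]
  refine ⟨F, y - F, ?_⟩
  intro p hp
  simp only [Set.mem_insert_iff, Set.mem_singleton_iff] at hp
  rcases hp with rfl | rfl | rfl
  · exact ⟨rA, by rw [vadd_eq_add]; exact hrA⟩
  · exact ⟨rB, by rw [vadd_eq_add]; exact hrB⟩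
  · exact ⟨rC, by rw [vadd_eq_add]; exact hrC⟩
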